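/- Let φ be a 3-CNF formula with variables x_1,…,x_n and clauses C_{n+1},…,C_{n+m}, each clause consisting of exactly three literals. Let q = ⌈log₂(n+m)⌉ and r = 4q+2, and let id(i) for 1 ≤ i ≤ n+m be as defined. For each variable i, let c_i (resp. d_i) be the number of clauses containing the literal x_i (resp. ¬x_i), counted with multiplicity, and f_i = c_i + d_i. Fix, for each i, a string a^{x_i} that is the concatenation (in any fixed order) of id(j) over all clauses C_j containing literal x_i, followed by d_i copies of 1 · 0^{r−2} · 1, and similarly a^{¬x_i} the concatenation of id(j) over clauses containing ¬x_i followed by c_i copies of 1 · 0^{r−2} · 1. Let b^i = id(i) · a^{x_i} · id(i) · a^{¬x_i} · id(i) and s = b^1 · b^2 ⋯ b^n. Let the collection of strings consist of: for each variable i the string id(i) · 0^{r·f_i} · id(i); for each clause C_j the string id(j); and n+2m copies of the filler string 1 · 0^{r−2} · 1. Then φ is satisfiable if and only if this String Crafting instance (s together with the collection of strings) has a solution. -/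

import Mathlib

/-- The `q`-bit binary representation of `i` (bit `p` is `i.testBit p`);
an injective `q`-bit encoding of the range `1 ≤ i ≤ 2^q` (with `nb(2^q) = 0⋯0`). -/
def nbStr (q i : ℕ) : List Bool := (List.range q).map i.testBit

/-- `id(i) = 1 · nb(i) · (nb(i))̄ · ((nb(i))̄)^R · (nb(i))^R · 1`, a string of length `4q+2`. -/
def idStr (q i : ℕ) : List Bool :=
  [true] ++ nbStr q i ++ (nbStr q i).map (! ·) ++ ((nbStr q i).map (! ·)).reverse
    ++ (nbStr q i).reverse ++ [true]

/-- The filler string `1 · 0^{r-2} · 1`. -/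
def fillerStr (r : ℕ) : List Bool := [true] ++ List.replicate (r - 2) false ++ [true]

open List

namespace SCAux

def Dom (t s' : List Bool) : Prop := ∀ p, t.getD p false = true → s'.getD p false = true

lemma dom_refl (t : List Bool) : Dom t t := fun _ h => h

@[simp] lemma nbStr_length (q i : ℕ) : (nbStr q i).length = q := by simp [nbStr]

@[simp] lemma idStr_length (q i : ℕ) : (idStr q i).length = 4 * q + 2 := by
  simp [idStr]; omega

@[simp] lemma fillerStr_length (q : ℕ) : (fillerStr (4 * q + 2)).length = 4 * q + 2 := by
  simp [fillerStr]

lemma nbStr_getD {q i p : ℕ} (hp : p < q) : (nbStr q i).getD p false = i.testBit p := by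
  rw [List.getD_eq_getElem _ _ (by simpa using hp)]
  simp [nbStr]

lemma idStr_getD_zero (q i : ℕ) : (idStr q i).getD 0 false = true := by
  unfold idStr
  rw [getD_append _ _ _ _ (by simp)]
  rw [getD_append _ _ _ _ (by simp)]
  rw [getD_append _ _ _ _ (by simp)]
  rw [getD_append _ _ _ _ (by simp)]
  rw [getD_append _ _ _ _ (by simp)]
  rfl

lemma idStr_getD_last (q i : ℕ) : (idStr q i).getD (4 * q + 1) false = true := by
  unfold idStr
  rw [getD_append_right _ _ _ _ (by simp; omega)]
  have h : 4 * q + 1 - ([true] ++ nbStr q i ++ (nbStr q i).map (! ·) ++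
      ((nbStr q i).map (! ·)).reverse ++ (nbStr q i).reverse).length = 0 := by
    simp; omega
  rw [h]; rfl

lemma idStr_getD_nb {q i p : ℕ} (hp : p < q) :
    (idStr q i).getD (1 + p) false = i.testBit p := by
  unfold idStr
  rw [getD_append _ _ _ _ (by simp; omega)]
  rw [getD_append _ _ _ _ (by simp; omega)]
  rw [getD_append _ _ _ _ (by simp; omega)]
  rw [getD_append _ _ _ _ (by simp; omega)]
  rw [getD_append_right _ _ _ _ (by simp)]
  have h : 1 + p - ([true] : List Bool).length = p := by simp
  rw [h]
  exact nbStr_getD hp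

lemma idStr_getD_nbc {q i p : ℕ} (hp : p < q) :
    (idStr q i).getD (1 + q + p) false = ! i.testBit p := by
  unfold idStr
  rw [getD_append _ _ _ _ (by simp; omega)]
  rw [getD_append _ _ _ _ (by simp; omega)]
  rw [getD_append _ _ _ _ (by simp; omega)]
  rw [getD_append_right _ _ _ _ (by simp; omega)]
  have h : 1 + q + p - ([true] ++ nbStr q i).length = p := by simp; omega
  rw [h, List.getD_eq_getElem _ _ (by simpa using hp)]
  simp [nbStr]

lemma fillerStr_getD {q p : ℕ} (hp : (fillerStr (4 * q + 2)).getD p false = true) :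
    p = 0 ∨ p = 4 * q + 1 := by
  by_contra hc
  push_neg at hc
  rcases Nat.eq_zero_or_pos p with h0 | h0
  · exact hc.1 h0
  rcases lt_or_ge p (4 * q + 2) with h2 | h2
  · unfold fillerStr at hp
    rw [getD_append _ _ _ _ (by simp; omega)] at hp
    rw [getD_append_right _ _ _ _ (by simp; omega)] at hp
    rw [List.getD_eq_getElem _ _ (by simp; omega)] at hp
    simp at hp
  · rw [List.getD_eq_default _ _ (by simp; omega)] at hp
    exact Bool.false_ne_true hp

lemma testBit_eq_of_le {i i' q : ℕ} (hi : 1 ≤ i) (hi2 : i ≤ 2 ^ q) (hi' : 1 ≤ i') (hi'2 : i' ≤ 2 ^ q)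
    (h : ∀ p < q, i.testBit p = i'.testBit p) : i = i' := by
  have hmod : i % 2 ^ q = i' % 2 ^ q := by
    apply Nat.eq_of_testBit_eq
    intro p
    rw [Nat.testBit_mod_two_pow, Nat.testBit_mod_two_pow]
    by_cases hp : p < q
    · simp [hp, h p hp]
    · simp [hp]
  rcases lt_or_eq_of_le hi2 with hl | he
  · rcases lt_or_eq_of_le hi'2 with hl' | he'
    · rwa [Nat.mod_eq_of_lt hl, Nat.mod_eq_of_lt hl'] at hmod
    · subst he'
      rw [Nat.mod_self, Nat.mod_eq_of_lt hl] at hmod; omega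
  · subst he
    rcases lt_or_eq_of_le hi'2 with hl' | he'
    · rw [Nat.mod_self, Nat.mod_eq_of_lt hl'] at hmod; omega
    · omega

lemma dom_id_id {q i i' : ℕ} (hi : 1 ≤ i) (hi2 : i ≤ 2 ^ q) (hi' : 1 ≤ i') (hi'2 : i' ≤ 2 ^ q)
    (h : Dom (idStr q i) (idStr q i')) : i = i' := by
  apply testBit_eq_of_le hi hi2 hi' hi'2
  intro p hp
  have h1 := h (1 + p)
  have h2 := h (1 + q + p)
  rw [idStr_getD_nb hp, idStr_getD_nb hp] at h1
  rw [idStr_getD_nbc hp, idStr_getD_nbc hp] at h2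
  cases hb : i.testBit p <;> cases hb' : i'.testBit p
  · rfl
  · rw [hb, hb'] at h2; simpa using h2 rfl
  · rw [hb, hb'] at h1; simpa using h1 rfl
  · rfl

lemma not_dom_id_filler {q i : ℕ} (hq : 1 ≤ q) :
    ¬ Dom (idStr q i) (fillerStr (4 * q + 2)) := by
  intro h
  cases hb : i.testBit 0
  · have := h (1 + q) (by rw [show 1 + q = 1 + q + 0 by ring, idStr_getD_nbc hq]; simp [hb])
    rcases fillerStr_getD this with h1 | h1 <;> omega
  · have := h 1 (by rw [show (1:ℕ) = 1 + 0 by ring, idStr_getD_nb hq]; simp [hb])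
    rcases fillerStr_getD this with h1 | h1 <;> omega

lemma dom_filler {q : ℕ} {t : List Bool} (h0 : t.getD 0 false = true)
    (hl : t.getD (4 * q + 1) false = true) : Dom (fillerStr (4 * q + 2)) t := by
  intro p hp
  rcases fillerStr_getD hp with h | h <;> subst h
  · exact h0
  · exact hl

lemma dom_filler_id (q i : ℕ) : Dom (fillerStr (4 * q + 2)) (idStr q i) :=
  dom_filler (idStr_getD_zero q i) (idStr_getD_last q i)

lemma fillerStr_getD_zero (q : ℕ) : (fillerStr (4 * q + 2)).getD 0 false = true := by
  unfold fillerStr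
  rw [getD_append _ _ _ _ (by simp)]
  rw [getD_append _ _ _ _ (by simp)]
  rfl

lemma fillerStr_getD_last (q : ℕ) : (fillerStr (4 * q + 2)).getD (4 * q + 1) false = true := by
  unfold fillerStr
  rw [getD_append_right _ _ _ _ (by simp)]
  have h : 4 * q + 1 - (([true] : List Bool) ++ replicate (4 * q + 2 - 2) false).length = 0 := by
    simp
  rw [h]; rfl

lemma dom_filler_filler (q : ℕ) : Dom (fillerStr (4 * q + 2)) (fillerStr (4 * q + 2)) :=
  dom_refl _

lemma idStr_ne_fillerStr {q i : ℕ} (hq : 1 ≤ q) : idStr q i ≠ fillerStr (4 * q + 2) := by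
  intro h
  refine not_dom_id_filler hq (i := i) ?_
  intro p hp
  rw [← h]
  exact hp

lemma idStr_inj {q i i' : ℕ} (hi : 1 ≤ i) (hi2 : i ≤ 2 ^ q) (hi' : 1 ≤ i') (hi'2 : i' ≤ 2 ^ q)
    (h : idStr q i = idStr q i') : i = i' := by
  refine dom_id_id hi hi2 hi' hi'2 ?_
  intro p hp
  rw [← h]
  exact hp

lemma dom_false (k : ℕ) (s' : List Bool) : Dom (replicate k false) s' := by
  intro p hp
  exfalso
  rcases lt_or_ge p k with h | h
  · rw [List.getD_eq_getElem _ _ (by simpa using h)] at hp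
    simp at hp
  · rw [List.getD_eq_default _ _ (by simpa using h)] at hp
    exact Bool.false_ne_true hp

lemma dom_append {t1 t2 s1 s2 : List Bool} (hl : t1.length = s1.length)
    (h1 : Dom t1 s1) (h2 : Dom t2 s2) : Dom (t1 ++ t2) (s1 ++ s2) := by
  intro p hp
  rcases lt_or_ge p t1.length with h | h
  · rw [getD_append _ _ _ _ h] at hp
    rw [getD_append _ _ _ _ (hl ▸ h)]
    exact h1 p hp
  · rw [getD_append_right _ _ _ _ h] at hp
    rw [getD_append_right _ _ _ _ (hl ▸ h), ← hl]
    exact h2 _ hp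

lemma dom_flatten {T S : List (List Bool)}
    (h : Forall₂ (fun t s' => t.length = s'.length ∧ Dom t s') T S) :
    T.flatten.length = S.flatten.length ∧ Dom T.flatten S.flatten := by
  induction h with
  | nil => exact ⟨rfl, dom_refl _⟩
  | cons h _ ih =>
      refine ⟨by simp [h.1, ih.1], ?_⟩
      simpa using dom_append h.1 h.2 ih.2

lemma getD_flatten_add {α : Type*} :
    ∀ (L : List (List α)) (k c : ℕ) (d : α), c < (L.getD k []).length →
      L.flatten.getD (((L.take k).map length).sum + c) d = (L.getD k []).getD c d := by
  intro L
  induction L with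
  | nil => intro k c d hc; simp at hc
  | cons h t ih =>
      intro k c d hc
      cases k with
      | zero =>
          simp only [take_zero, map_nil, sum_nil, Nat.zero_add, flatten_cons, getD_cons_zero]
          simp only [getD_cons_zero] at hc
          exact getD_append _ _ _ _ hc
      | succ k =>
          simp only [take_succ_cons, map_cons, sum_cons, flatten_cons, getD_cons_succ]
          simp only [getD_cons_succ] at hc
          rw [Nat.add_assoc, getD_append_right _ _ _ _ (Nat.le_add_right _ _),
            Nat.add_sub_cancel_left]
          exact ih k c d hc

lemma exists_flatten_decomp {α : Type*} :
    ∀ (L : List (List α)) (β : ℕ), β < L.flatten.length →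
      ∃ k c, k < L.length ∧ c < (L.getD k []).length ∧ β = ((L.take k).map length).sum + c := by
  intro L
  induction L with
  | nil => intro β hβ; simp at hβ
  | cons h t ih =>
      intro β hβ
      rcases lt_or_ge β h.length with hb | hb
      · exact ⟨0, β, Nat.succ_pos _, by simpa using hb, by simp⟩
      · simp only [flatten_cons, length_append] at hβ
        obtain ⟨k, c, hk, hc, he⟩ := ih (β - h.length) (by omega)
        exact ⟨k + 1, c, by simpa using hk, by simpa using hc, by
          simp only [take_succ_cons, map_cons, sum_cons]; omega⟩

lemma sum_map_length_take {r : ℕ} :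
    ∀ (L : List (List Bool)) (k : ℕ), (∀ x ∈ L, x.length = r) → k ≤ L.length →
      ((L.take k).map length).sum = r * k := by
  intro L
  induction L with
  | nil => intro k _ hk; simp at hk; simp [hk]
  | cons h t ih =>
      intro k hall hk
      cases k with
      | zero => simp
      | succ k =>
          simp only [take_succ_cons, map_cons, sum_cons]
          rw [hall h (mem_cons_self), ih k (fun x hx => hall x (mem_cons_of_mem _ hx))
            (by simpa using hk)]
          ring

lemma flatten_length_const {r : ℕ} (L : List (List Bool)) (h : ∀ x ∈ L, x.length = r) :
    L.flatten.length = r * L.length := by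
  have h2 := sum_map_length_take (r := r) L L.length h le_rfl
  rw [take_length] at h2
  rw [length_flatten]
  exact h2

/-- per-variable, per-sign region of `s`, as a list of blocks. -/
def regionB (q n m : ℕ) (cntj : Fin m → ℕ) (dfill : ℕ) : List (List Bool) :=
  ((List.finRange m).map (fun j => replicate (cntj j) (idStr q (n + 1 + j.val)))).flatten
    ++ replicate dfill (fillerStr (4 * q + 2))

lemma flatten_flatten_map {α β : Type*} (l : List α) (g : α → List (List β)) :
    ((l.map g).flatten).flatten = (l.map (fun a => (g a).flatten)).flatten := by
  induction l with
  | nil => simp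
  | cons a t ih => simp only [map_cons, flatten_cons, flatten_append, ih]

lemma regionB_mem {q n m : ℕ} {cntj : Fin m → ℕ} {dfill : ℕ} {x : List Bool}
    (hx : x ∈ regionB q n m cntj dfill) :
    x = fillerStr (4 * q + 2) ∨ ∃ j : Fin m, 0 < cntj j ∧ x = idStr q (n + 1 + j.val) := by
  rcases mem_append.1 hx with h | h
  · right
    rcases mem_flatten.1 h with ⟨l, hl, hxl⟩
    rcases mem_map.1 hl with ⟨j, _, rfl⟩
    rcases mem_replicate.1 hxl with ⟨hne, rfl⟩
    exact ⟨j, Nat.pos_of_ne_zero hne, rfl⟩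
  · exact Or.inl (eq_of_mem_replicate h)

lemma regionB_blocklen {q n m : ℕ} {cntj : Fin m → ℕ} {dfill : ℕ} {x : List Bool}
    (hx : x ∈ regionB q n m cntj dfill) : x.length = 4 * q + 2 := by
  rcases regionB_mem hx with h | ⟨j, _, h⟩ <;> subst h <;> simp

lemma regionB_length (q n m : ℕ) (cntj : Fin m → ℕ) (dfill : ℕ) :
    (regionB q n m cntj dfill).length = (∑ j, cntj j) + dfill := by
  simp [regionB, length_flatten, Function.comp_def, Fin.sum_univ_def]

lemma regionB_flatten (q n m : ℕ) (cntj : Fin m → ℕ) (dfill : ℕ) :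
    (regionB q n m cntj dfill).flatten =
      ((List.finRange m).map (fun j =>
        (replicate (cntj j) (idStr q (n + 1 + j.val))).flatten)).flatten
      ++ (replicate dfill (fillerStr (4 * q + 2))).flatten := by
  simp only [regionB, flatten_append]
  rw [flatten_flatten_map]

/-- the five-part block list for a variable. -/
def blistB (A : List Bool) (RT RF : List (List Bool)) : List (List Bool) :=
  [A] ++ RT ++ [A] ++ RF ++ [A]

lemma blistB_length {A RT RF} : (blistB A RT RF).length = 3 + RT.length + RF.length := by
  simp [blistB]; omega

lemma blistB_mem {A : List Bool} {RT RF : List (List Bool)} {x : List Bool}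
    (hx : x ∈ blistB A RT RF) : x = A ∨ x ∈ RT ∨ x ∈ RF := by
  simp only [blistB, mem_append, mem_singleton] at hx
  tauto

lemma blistB_getD_zero {A : List Bool} {RT RF : List (List Bool)} :
    (blistB A RT RF).getD 0 [] = A := by
  simp [blistB]

lemma blistB_getD_T {A : List Bool} {RT RF : List (List Bool)} {c : ℕ}
    (h1 : 1 ≤ c) (h2 : c ≤ RT.length) :
    (blistB A RT RF).getD c [] = RT.getD (c - 1) [] := by
  unfold blistB
  rw [getD_append _ _ _ _ (by simp; omega)]
  rw [getD_append _ _ _ _ (by simp; omega)]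
  rw [getD_append _ _ _ _ (by simp; omega)]
  rw [getD_append_right _ _ _ _ (by simp; omega)]
  simp

lemma blistB_getD_A2 {A : List Bool} {RT RF : List (List Bool)} :
    (blistB A RT RF).getD (1 + RT.length) [] = A := by
  unfold blistB
  rw [getD_append _ _ _ _ (by simp; omega)]
  rw [getD_append _ _ _ _ (by simp; omega)]
  rw [getD_append_right _ _ _ _ (by simp)]
  have h : 1 + RT.length - (([A] : List (List Bool)) ++ RT).length = 0 := by simp; omega
  rw [h]; rfl

lemma blistB_getD_F {A : List Bool} {RT RF : List (List Bool)} {c : ℕ}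
    (h1 : 2 + RT.length ≤ c) (h2 : c ≤ 1 + RT.length + RF.length) :
    (blistB A RT RF).getD c [] = RF.getD (c - (2 + RT.length)) [] := by
  unfold blistB
  rw [getD_append _ _ _ _ (by simp; omega)]
  rw [getD_append_right _ _ _ _ (by simp; omega)]
  congr 1
  simp; omega

lemma blistB_getD_A3 {A : List Bool} {RT RF : List (List Bool)} :
    (blistB A RT RF).getD (2 + RT.length + RF.length) [] = A := by
  unfold blistB
  rw [getD_append_right _ _ _ _ (by simp; omega)]
  have h : 2 + RT.length + RF.length -
      (([A] : List (List Bool)) ++ RT ++ [A] ++ RF).length = 0 := by simp; omega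
  rw [h]; rfl

/-- pieces placed over a free region in the forward direction. -/
def pieceB (q n m : ℕ) (cntj : Fin m → ℕ) (selp : Fin m → Bool) (dfill : ℕ) :
    List (List Bool) :=
  ((List.finRange m).map (fun j =>
    if selp j then idStr q (n + 1 + j.val) :: replicate (cntj j - 1) (fillerStr (4 * q + 2))
    else replicate (cntj j) (fillerStr (4 * q + 2)))).flatten
    ++ replicate dfill (fillerStr (4 * q + 2))

lemma forall₂_append {α : Type*} {R : α → α → Prop} :
    ∀ {l1 l2 l1' l2' : List α}, Forall₂ R l1 l2 → Forall₂ R l1' l2' →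
      Forall₂ R (l1 ++ l1') (l2 ++ l2') := by
  intro l1 l2 l1' l2' h h'
  induction h with
  | nil => simpa using h'
  | cons hr _ ih => exact Forall₂.cons hr ih

lemma forall₂_replicate {α : Type*} {R : α → α → Prop} {x y : α} (h : R x y) (k : ℕ) :
    Forall₂ R (replicate k x) (replicate k y) := by
  induction k with
  | zero => simp [Forall₂.nil]
  | succ k ih => simpa [replicate_succ] using Forall₂.cons h ih

lemma forall₂_flatten_map {α β : Type*} {R : β → β → Prop} {l : List α}
    {f g : α → List β} (h : ∀ x ∈ l, Forall₂ R (f x) (g x)) :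
    Forall₂ R ((l.map f).flatten) ((l.map g).flatten) := by
  induction l with
  | nil => simp [Forall₂.nil]
  | cons a t ih =>
      simp only [map_cons, flatten_cons]
      exact forall₂_append (h a (mem_cons_self)) (ih (fun x hx => h x (mem_cons_of_mem _ hx)))

lemma pieceB_forall₂ {q n m : ℕ} {cntj : Fin m → ℕ} {selp : Fin m → Bool} {dfill : ℕ}
    (hsel : ∀ j, selp j = true → 1 ≤ cntj j) :
    Forall₂ (fun t s' => t.length = s'.length ∧ Dom t s')
      (pieceB q n m cntj selp dfill) (regionB q n m cntj dfill) := by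
  unfold pieceB regionB
  refine forall₂_append ?_ (forall₂_replicate ⟨rfl, dom_refl _⟩ _)
  refine forall₂_flatten_map ?_
  intro j _
  by_cases hj : selp j = true
  · simp only [hj, if_true]
    have hc : cntj j = (cntj j - 1) + 1 := by
      have := hsel j hj; omega
    rw [hc, replicate_succ]
    exact Forall₂.cons ⟨by simp, dom_refl _⟩
      (forall₂_replicate ⟨by simp, dom_filler_id q _⟩ _)
  · simp only [Bool.not_eq_true] at hj
    simp only [hj, Bool.false_eq_true, if_false]
    exact forall₂_replicate ⟨by simp, dom_filler_id q _⟩ _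

lemma forall₂_map {α β : Type*} {R : β → β → Prop} {l : List α} {f g : α → β}
    (h : ∀ x ∈ l, R (f x) (g x)) : Forall₂ R (l.map f) (l.map g) := by
  induction l with
  | nil => simp [Forall₂.nil]
  | cons a t ih =>
      exact Forall₂.cons (h a (mem_cons_self)) (ih (fun x hx => h x (mem_cons_of_mem _ hx)))

lemma coe_map_sum {α β : Type*} (l : List α) (g : α → β) :
    (↑(l.map g) : Multiset β) = (l.map (fun a => ({g a} : Multiset β))).sum := by
  induction l with
  | nil => simp
  | cons a t ih => rw [map_cons, ← Multiset.cons_coe, ih, map_cons, sum_cons,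
      Multiset.singleton_add]

lemma coe_flatten_map {α β : Type*} (l : List α) (g : α → List β) :
    (↑((l.map g).flatten) : Multiset β) = (l.map (fun a => (↑(g a) : Multiset β))).sum := by
  induction l with
  | nil => simp
  | cons a t ih =>
      rw [map_cons, flatten_cons, ← Multiset.coe_add, ih, map_cons, sum_cons]

lemma rep_sum {α ι : Type*} (x : α) (s : Finset ι) (g : ι → ℕ) :
    ∑ i ∈ s, Multiset.replicate (g i) x = Multiset.replicate (∑ i ∈ s, g i) x := by
  classical
  induction s using Finset.induction_on with
  | empty => simp
  | insert _ _ hns ih =>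
      rw [Finset.sum_insert hns, Finset.sum_insert hns, Multiset.replicate_add, ih]

lemma pieceB_coe {q n m : ℕ} (cntj : Fin m → ℕ) (selp : Fin m → Bool) (dfill : ℕ) :
    (↑(pieceB q n m cntj selp dfill) : Multiset (List Bool)) =
      (∑ j : Fin m, if selp j
        then ({idStr q (n + 1 + j.val)} : Multiset (List Bool))
          + Multiset.replicate (cntj j - 1) (fillerStr (4 * q + 2))
        else Multiset.replicate (cntj j) (fillerStr (4 * q + 2)))
      + Multiset.replicate dfill (fillerStr (4 * q + 2)) := by
  unfold pieceB
  rw [← Multiset.coe_add, coe_flatten_map, Fin.sum_univ_def]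
  congr 1
  · refine congrArg List.sum (List.map_congr_left ?_)
    intro j _
    by_cases hj : selp j = true
    · rw [if_pos hj, if_pos hj, ← Multiset.cons_coe, Multiset.coe_replicate,
        Multiset.singleton_add]
    · simp only [Bool.not_eq_true] at hj
      simp [hj, Multiset.coe_replicate]

end SCAux

open SCAux

/-- A solution of the String Crafting instance `(s; t_1,…,t_N)`: a reordering `u` of the
collection `ts` such that wherever the concatenation of `u` has a `1`, `s` has a `1`. -/
def SCSol (s : List Bool) (ts : List (List Bool)) : Prop :=
  ∃ u : List (List Bool), u.Perm ts ∧
    ∀ p : ℕ, u.flatten.getD p false = true → s.getD p false = true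

/-- Correctness of the reduction from 3-Satisfiability to String Crafting.
Variables are numbered `1,…,n` (variable `i : Fin n` has number `i+1`), clauses are numbered
`n+1,…,n+m` (clause `j : Fin m` has number `n+1+j`); a literal is a pair of a variable and
a `Bool` (its sign), and each clause consists of exactly three literals. -/
theorem threeSat_iff_stringCrafting (n m : ℕ)
    (clauses : Fin m → (Fin n × Bool) × (Fin n × Bool) × (Fin n × Bool)) :
    let q := Nat.clog 2 (n + m)
    let r := 4 * q + 2
    -- the three literals of a clause
    let lits : Fin m → List (Fin n × Bool) :=
      fun j => [(clauses j).1, (clauses j).2.1, (clauses j).2.2]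
    -- number of occurrences (with multiplicity) of the literal `(i, pos)` in the clauses
    let cnt : Fin n → Bool → ℕ := fun i pos => ∑ j : Fin m, (lits j).count (i, pos)
    -- `f_i = c_i + d_i`
    let f : Fin n → ℕ := fun i => cnt i true + cnt i false
    -- `a^{x_i}` (for `pos = true`) resp. `a^{¬x_i}` (for `pos = false`): the concatenation,
    -- in a fixed order, of `id(j)` over occurrences of the literal in clauses `C_j`,
    -- followed by the appropriate number of copies of the filler string
    let aStr : Fin n → Bool → List Bool := fun i pos =>
      ((List.finRange m).map (fun j =>
        (List.replicate ((lits j).count (i, pos)) (idStr q (n + 1 + j.val))).flatten)).flatten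
      ++ (List.replicate (cnt i !pos) (fillerStr r)).flatten
    -- `b^i = id(i) · a^{x_i} · id(i) · a^{¬x_i} · id(i)`
    let b : Fin n → List Bool := fun i =>
      idStr q (i.val + 1) ++ aStr i true ++ idStr q (i.val + 1) ++ aStr i false
        ++ idStr q (i.val + 1)
    -- `s = b^1 · b^2 ⋯ b^n`
    let s : List Bool := ((List.finRange n).map b).flatten
    -- the collection of strings: variable selection strings, clause verification strings,
    -- and `n + 2m` filler strings
    let ts : List (List Bool) :=
      (List.finRange n).map (fun i =>
        idStr q (i.val + 1) ++ List.replicate (r * f i) false ++ idStr q (i.val + 1))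
      ++ (List.finRange m).map (fun j => idStr q (n + 1 + j.val))
      ++ List.replicate (n + 2 * m) (fillerStr r)
    -- satisfiability of the 3-CNF formula is equivalent to solvability of the instance
    ((∃ a : Fin n → Bool, ∀ j : Fin m,
        a (clauses j).1.1 = (clauses j).1.2 ∨
        a (clauses j).2.1.1 = (clauses j).2.1.2 ∨
        a (clauses j).2.2.1 = (clauses j).2.2.2) ↔
      SCSol s ts) := by
  intro q r lits cnt f aStr b s ts
  classical
  have hr : r = 4 * q + 2 := rfl
  constructor
  · rintro ⟨a, ha⟩
    -- witness literal for each clause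
    set w : Fin m → Fin n × Bool := fun j =>
      if a (clauses j).1.1 = (clauses j).1.2 then (clauses j).1
      else if a (clauses j).2.1.1 = (clauses j).2.1.2 then (clauses j).2.1
      else (clauses j).2.2 with hw
    have hwmem : ∀ j, w j ∈ lits j := by
      intro j
      simp only [hw, lits]
      split_ifs <;> simp
    have hwa : ∀ j, a (w j).1 = (w j).2 := by
      intro j
      simp only [hw]
      split_ifs with h1 h2
      · exact h1
      · exact h2
      · rcases ha j with h | h | h
        · exact absurd h h1
        · exact absurd h h2
        · exact h
    have hwcnt : ∀ (j : Fin m) (i : Fin n) (pos : Bool),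
        w j = (i, pos) → 1 ≤ (lits j).count (i, pos) := by
      intro j i pos hji
      rw [← hji]
      exact List.count_pos_iff.2 (hwmem j)
    set vp : Fin n → List Bool := fun i =>
      idStr q (i.val + 1) ++ List.replicate (r * f i) false ++ idStr q (i.val + 1) with hvp
    set Mreg : Fin n → List (List Bool) := fun i =>
      pieceB q n m (fun j => (lits j).count (i, a i)) (fun j => decide (w j = (i, a i)))
        (cnt i (! a i)) with hMreg
    set U : Fin n → List (List Bool) := fun i =>
      if a i then [fillerStr r] ++ Mreg i ++ [vp i] else [vp i] ++ Mreg i ++ [fillerStr r]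
      with hU
    have hselOK : ∀ (i : Fin n) (j : Fin m), (decide (w j = (i, a i)) = true) →
        1 ≤ (lits j).count (i, a i) := by
      intro i j hj
      exact hwcnt j i (a i) (of_decide_eq_true hj)
    -- region descriptions
    have haS : ∀ (i : Fin n) (pos : Bool),
        (regionB q n m (fun j => (lits j).count (i, pos)) (cnt i (! pos))).flatten
          = aStr i pos := by
      intro i pos
      rw [regionB_flatten]
    have hcnt_eq : ∀ (i : Fin n) (pos : Bool),
        (∑ j : Fin m, (lits j).count (i, pos)) = cnt i pos := fun _ _ => rfl
    have hfa : ∀ i : Fin n, cnt i (a i) + cnt i (! a i) = f i := by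
      intro i
      cases hai : a i
      · show cnt i false + cnt i true = f i
        show cnt i false + cnt i true = cnt i true + cnt i false
        omega
      · rfl

    have haLen : ∀ (i : Fin n) (pos : Bool), (aStr i pos).length = r * f i := by
      intro i pos
      rw [← haS i pos, flatten_length_const (r := r) _
        (fun x hx => by rw [hr]; exact regionB_blocklen hx)]
      rw [regionB_length, hcnt_eq]
      congr 1
      cases pos
      · show cnt i false + cnt i true = cnt i true + cnt i false
        omega
      · rfl
    have hM : ∀ i : Fin n, ((Mreg i).flatten.length = (aStr i (a i)).length
        ∧ Dom (Mreg i).flatten (aStr i (a i))) := by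
      intro i
      have := dom_flatten (pieceB_forall₂ (q := q) (n := n) (m := m)
        (cntj := fun j => (lits j).count (i, a i))
        (selp := fun j => decide (w j = (i, a i)))
        (dfill := cnt i (! a i)) (hselOK i))
      rwa [haS i (a i)] at this
    refine ⟨((List.finRange n).map U).flatten, ?_, ?_⟩
    · -- permutation
      have hcount3 : ∀ j : Fin m, ∑ x : Fin n × Bool, (lits j).count x = 3 := by
        intro j
        have hl : lits j = [(clauses j).1, (clauses j).2.1, (clauses j).2.2] := rfl
        rw [hl]
        simp only [List.count_cons, List.count_nil, beq_iff_eq,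
          Finset.sum_add_distrib, Finset.sum_ite_eq, Finset.mem_univ, if_true]
        simp
      have hf_sum : ∑ i : Fin n, f i = 3 * m := by
        have h1 : ∑ i : Fin n, f i = ∑ i : Fin n, ∑ bb : Bool, cnt i bb := by
          refine Finset.sum_congr rfl fun i _ => ?_
          rw [Fintype.sum_bool]
        have h2 : ∀ i : Fin n, ∑ bb : Bool, cnt i bb
            = ∑ j : Fin m, ∑ bb : Bool, (lits j).count (i, bb) := by
          intro i
          exact Finset.sum_comm
        have h3 : ∑ i : Fin n, ∑ j : Fin m, ∑ bb : Bool, (lits j).count (i, bb)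
            = ∑ j : Fin m, ∑ i : Fin n, ∑ bb : Bool, (lits j).count (i, bb) :=
          Finset.sum_comm
        rw [h1, Finset.sum_congr rfl (fun i _ => h2 i), h3]
        have h4 : ∀ j : Fin m, ∑ i : Fin n, ∑ bb : Bool, (lits j).count (i, bb) = 3 := by
          intro j
          have h5 := hcount3 j
          rw [Fintype.sum_prod_type] at h5
          exact h5
        rw [Finset.sum_congr rfl (fun j _ => h4 j)]
        simp [mul_comm]
      have hsat1 : ∀ j : Fin m, 1 ≤ ∑ i : Fin n, (lits j).count (i, a i) := by
        intro j
        have hwj : w j = ((w j).1, a (w j).1) := by rw [hwa j]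
        refine le_trans (hwcnt j (w j).1 (a (w j).1) hwj) ?_
        exact Finset.single_le_sum (f := fun i : Fin n => (lits j).count (i, a i))
          (fun _ _ => Nat.zero_le _) (Finset.mem_univ (w j).1)
      rw [← Multiset.coe_eq_coe]
      have hts2 : ts = (List.finRange n).map vp
          ++ ((List.finRange m).map (fun j => idStr q (n + 1 + j.val))
          ++ List.replicate (n + 2 * m) (fillerStr r)) := by
        rw [← List.append_assoc]
      rw [hts2, ← Multiset.coe_add, ← Multiset.coe_add, coe_flatten_map,
        ← Fin.sum_univ_def, coe_map_sum, coe_map_sum, ← Fin.sum_univ_def,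
        ← Fin.sum_univ_def, Multiset.coe_replicate]
      have hUcoe : ∀ i : Fin n, (↑(U i) : Multiset (List Bool))
          = {vp i} + ({fillerStr r} + ↑(Mreg i)) := by
        intro i
        have hsplit : ∀ (x y : List Bool) (L : List (List Bool)),
            (↑([x] ++ L ++ [y]) : Multiset (List Bool)) = {y} + ({x} + ↑L) := by
          intro x y L
          rw [← Multiset.coe_add, ← Multiset.coe_add]
          have hx : (↑([x]) : Multiset (List Bool)) = {x} := rfl
          have hy : (↑([y]) : Multiset (List Bool)) = {y} := rfl
          rw [hx, hy]
          abel
        by_cases hai : a i = true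
        · simp only [hU, hai, if_true]
          rw [hsplit]
        · simp only [hU, hai, Bool.false_eq_true, if_false]
          rw [show ([vp i] ++ Mreg i ++ [fillerStr r] : List (List Bool))
            = [vp i] ++ (Mreg i ++ [fillerStr r]) from by simp]
          rw [← Multiset.coe_add, ← Multiset.coe_add]
          have hx : (↑([vp i]) : Multiset (List Bool)) = {vp i} := rfl
          have hy : (↑([fillerStr r]) : Multiset (List Bool)) = {fillerStr r} := rfl
          rw [hx, hy]
          abel
      have hMcoe : ∀ i : Fin n, (↑(Mreg i) : Multiset (List Bool))
          = (∑ j : Fin m, if w j = (i, a i)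
              then ({idStr q (n + 1 + j.val)} : Multiset (List Bool))
                + Multiset.replicate ((lits j).count (i, a i) - 1) (fillerStr r)
              else Multiset.replicate ((lits j).count (i, a i)) (fillerStr r))
            + Multiset.replicate (cnt i (! a i)) (fillerStr r) := by
        intro i
        have := pieceB_coe (q := q) (n := n) (m := m)
          (fun j => (lits j).count (i, a i)) (fun j => decide (w j = (i, a i)))
          (cnt i (! a i))
        rw [← hr] at this
        simp only [decide_eq_true_eq] at this
        exact this
      have hinner : ∀ j : Fin m,
          (∑ i : Fin n, if w j = (i, a i)
              then ({idStr q (n + 1 + j.val)} : Multiset (List Bool))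
                + Multiset.replicate ((lits j).count (i, a i) - 1) (fillerStr r)
              else Multiset.replicate ((lits j).count (i, a i)) (fillerStr r))
            = {idStr q (n + 1 + j.val)}
              + Multiset.replicate ((∑ i : Fin n, (lits j).count (i, a i)) - 1)
                  (fillerStr r) := by
        intro j
        have hcond : ∀ i : Fin n, (w j = (i, a i)) ↔ i = (w j).1 := by
          intro i
          constructor
          · intro h
            rw [h]
          · rintro rfl
            rw [hwa j]
        have hstep : (∑ i : Fin n, if w j = (i, a i)
              then ({idStr q (n + 1 + j.val)} : Multiset (List Bool))
                + Multiset.replicate ((lits j).count (i, a i) - 1) (fillerStr r)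
              else Multiset.replicate ((lits j).count (i, a i)) (fillerStr r))
            = (∑ i : Fin n, if i = (w j).1
              then ({idStr q (n + 1 + j.val)} : Multiset (List Bool))
                + Multiset.replicate ((lits j).count (i, a i) - 1) (fillerStr r)
              else Multiset.replicate ((lits j).count (i, a i)) (fillerStr r)) :=
          Finset.sum_congr rfl (fun i _ => if_congr (hcond i) rfl rfl)
        rw [hstep, ← Finset.add_sum_erase _ _ (Finset.mem_univ (w j).1), if_pos rfl]
        have herase : (∑ i ∈ Finset.univ.erase (w j).1, if i = (w j).1
              then ({idStr q (n + 1 + j.val)} : Multiset (List Bool))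
                + Multiset.replicate ((lits j).count (i, a i) - 1) (fillerStr r)
              else Multiset.replicate ((lits j).count (i, a i)) (fillerStr r))
            = Multiset.replicate (∑ i ∈ Finset.univ.erase (w j).1,
                (lits j).count (i, a i)) (fillerStr r) := by
          rw [Finset.sum_congr rfl
            (fun i hi => if_neg (Finset.ne_of_mem_erase hi))]
          rw [rep_sum]
        rw [herase, add_assoc, ← Multiset.replicate_add]
        have hc0 : 1 ≤ (lits j).count ((w j).1, a (w j).1) := by
          refine hwcnt j (w j).1 (a (w j).1) ?_
          rw [hwa j]
        have hsum0 : (lits j).count ((w j).1, a (w j).1)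
            + ∑ i ∈ Finset.univ.erase (w j).1, (lits j).count (i, a i)
            = ∑ i : Fin n, (lits j).count (i, a i) :=
          Finset.add_sum_erase _ (fun i => (lits j).count (i, a i)) (Finset.mem_univ _)
        congr 1
        rw [← hsum0]
        congr 1
        omega
      have hfill1 : (∑ _i : Fin n, ({fillerStr r} : Multiset (List Bool)))
          = Multiset.replicate n (fillerStr r) := by
        rw [Finset.sum_congr rfl
          (fun i _ => (Multiset.replicate_one (fillerStr r)).symm), rep_sum]
        simp
      calc (∑ i : Fin n, (↑(U i) : Multiset (List Bool)))
          = ∑ i : Fin n, ({vp i} + ({fillerStr r} + (↑(Mreg i) : Multiset (List Bool)))) :=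
            Finset.sum_congr rfl (fun i _ => hUcoe i)
        _ = (∑ i : Fin n, ({vp i} : Multiset (List Bool)))
            + ((∑ _i : Fin n, ({fillerStr r} : Multiset (List Bool)))
              + ∑ i : Fin n, (↑(Mreg i) : Multiset (List Bool))) := by
            rw [Finset.sum_add_distrib, Finset.sum_add_distrib]
        _ = (∑ i : Fin n, ({vp i} : Multiset (List Bool)))
            + (Multiset.replicate n (fillerStr r)
              + ((∑ j : Fin m, (({idStr q (n + 1 + j.val)} : Multiset (List Bool))
                  + Multiset.replicate ((∑ i : Fin n, (lits j).count (i, a i)) - 1)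
                      (fillerStr r)))
                + Multiset.replicate (∑ i : Fin n, cnt i (! a i)) (fillerStr r))) := by
            rw [hfill1, Finset.sum_congr rfl (fun i _ => hMcoe i),
              Finset.sum_add_distrib, rep_sum, Finset.sum_comm,
              Finset.sum_congr rfl (fun j _ => hinner j)]
        _ = (∑ i : Fin n, ({vp i} : Multiset (List Bool)))
            + ((∑ j : Fin m, ({idStr q (n + 1 + j.val)} : Multiset (List Bool)))
            + Multiset.replicate (n + 2 * m) (fillerStr r)) := by
            rw [Finset.sum_add_distrib, rep_sum]
            have hkey : n + ((∑ j : Fin m, ((∑ i : Fin n, (lits j).count (i, a i)) - 1))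
                + (∑ i : Fin n, cnt i (! a i))) = n + 2 * m := by
              have e1 : (∑ j : Fin m, ((∑ i : Fin n, (lits j).count (i, a i)) - 1)) + m
                  = ∑ j : Fin m, ∑ i : Fin n, (lits j).count (i, a i) := by
                have : ∀ j ∈ Finset.univ, ((∑ i : Fin n, (lits j).count (i, a i)) - 1) + 1
                    = ∑ i : Fin n, (lits j).count (i, a i) := by
                  intro j _
                  have := hsat1 j
                  omega
                rw [← Finset.sum_congr rfl this, Finset.sum_add_distrib]
                simp
              have e2 : ∑ j : Fin m, ∑ i : Fin n, (lits j).count (i, a i)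
                  = ∑ i : Fin n, cnt i (a i) := by
                rw [Finset.sum_comm]
              have e3 : ∑ i : Fin n, (cnt i (a i) + cnt i (! a i)) = 3 * m := by
                rw [Finset.sum_congr rfl (fun i _ => hfa i)]
                exact hf_sum
              rw [Finset.sum_add_distrib] at e3
              omega
            rw [← hkey, Multiset.replicate_add, Multiset.replicate_add]
            abel
    · -- domination
      have hflat : (((List.finRange n).map U).flatten).flatten
          = ((List.finRange n).map (fun i => (U i).flatten)).flatten :=
        flatten_flatten_map _ _
      intro p
      rw [hflat]
      refine (dom_flatten (forall₂_map ?_)).2 p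
      intro i _
      have hb : b i = idStr q (i.val + 1) ++ aStr i true ++ idStr q (i.val + 1)
          ++ aStr i false ++ idStr q (i.val + 1) := rfl
      have hfl : (fillerStr r).length = r := by rw [hr]; exact fillerStr_length q
      cases hai : a i
      · -- a i = false : vp covers anchor1 + X + anchor2
        have hUi : (U i).flatten = vp i ++ ((Mreg i).flatten ++ (fillerStr r ++ [])) := by
          simp [hU, hai]
        have hMi := hM i
        rw [hai] at hMi
        constructor
        · rw [hUi, hb]
          simp only [length_append, hvp, hfl, haLen, hMi.1, length_nil]
          simp only [haLen, idStr_length, length_replicate]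
          rw [hr]; ring
        · rw [hUi, hb]
          simp only [List.append_assoc, hvp]
          refine dom_append (by simp) (dom_refl _) ?_
          refine dom_append (by simp [haLen]) (dom_false _ _) ?_
          refine dom_append (by simp) (dom_refl _) ?_
          refine dom_append (hMi.1) (hMi.2) ?_
          rw [append_nil, hr]
          exact dom_filler_id q _
      · -- a i = true : vp covers anchor2 + NX + anchor3
        have hUi : (U i).flatten = fillerStr r ++ ((Mreg i).flatten ++ (vp i ++ [])) := by
          simp [hU, hai]
        have hMi := hM i
        rw [hai] at hMi
        constructor
        · rw [hUi, hb]
          simp only [length_append, hvp, hfl, haLen, hMi.1, length_nil]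
          simp only [haLen, idStr_length, length_replicate]
          rw [hr]; ring
        · rw [hUi, hb]
          simp only [List.append_assoc, hvp]
          refine dom_append (by simp [hfl]; rfl) (by rw [hr]; exact dom_filler_id q _) ?_
          refine dom_append (hMi.1) (hMi.2) ?_
          refine dom_append (by simp) (dom_refl _) ?_
          refine dom_append (by simp [haLen]) (dom_false _ _) ?_
          rw [append_nil]
          exact dom_refl _
  · rintro ⟨u, hperm, hdom⟩
    rcases Nat.eq_zero_or_pos m with hm | hm
    · subst hm
      exact ⟨fun _ => true, fun j => j.elim0⟩
    rcases Nat.eq_zero_or_pos n with hn | hn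
    · subst hn
      exact ((clauses ⟨0, hm⟩).1.1).elim0
    have hq1 : 1 ≤ q := Nat.clog_pos (by norm_num) (by omega)
    have hq2 : n + m ≤ 2 ^ q := Nat.le_pow_clog (by norm_num) _
    have hr2 : 2 ≤ r := by rw [hr]; omega
    have hrpos : 0 < r := by omega
    -- shared counting fact
    have hcount3 : ∀ j : Fin m, ∑ x : Fin n × Bool, (lits j).count x = 3 := by
      intro j
      have hl : lits j = [(clauses j).1, (clauses j).2.1, (clauses j).2.2] := rfl
      rw [hl]
      simp only [List.count_cons, List.count_nil, beq_iff_eq,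
        Finset.sum_add_distrib, Finset.sum_ite_eq, Finset.mem_univ, if_true]
      simp
    have hf_sum : ∑ i : Fin n, f i = 3 * m := by
      have h1 : ∑ i : Fin n, f i = ∑ i : Fin n, ∑ bb : Bool, cnt i bb := by
        refine Finset.sum_congr rfl fun i _ => ?_
        rw [Fintype.sum_bool]
      have h2 : ∀ i : Fin n, ∑ bb : Bool, cnt i bb
          = ∑ j : Fin m, ∑ bb : Bool, (lits j).count (i, bb) := by
        intro i
        exact Finset.sum_comm
      have h3 : ∑ i : Fin n, ∑ j : Fin m, ∑ bb : Bool, (lits j).count (i, bb)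
          = ∑ j : Fin m, ∑ i : Fin n, ∑ bb : Bool, (lits j).count (i, bb) :=
        Finset.sum_comm
      rw [h1, Finset.sum_congr rfl (fun i _ => h2 i), h3]
      have h4 : ∀ j : Fin m, ∑ i : Fin n, ∑ bb : Bool, (lits j).count (i, bb) = 3 := by
        intro j
        have h5 := hcount3 j
        rw [Fintype.sum_prod_type] at h5
        exact h5
      rw [Finset.sum_congr rfl (fun j _ => h4 j)]
      simp [mul_comm]
    -- the block structure of s
    set RT : Fin n → List (List Bool) := fun i =>
      regionB q n m (fun j => (lits j).count (i, true)) (cnt i (!true)) with hRT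
    set RF : Fin n → List (List Bool) := fun i =>
      regionB q n m (fun j => (lits j).count (i, false)) (cnt i (!false)) with hRF
    set bl : Fin n → List (List Bool) := fun i =>
      blistB (idStr q (i.val + 1)) (RT i) (RF i) with hbl
    set Sb : List (List Bool) := ((List.finRange n).map bl).flatten with hSb
    have hRTlen : ∀ i : Fin n, (RT i).length = f i := by
      intro i
      simp only [hRT]
      rw [regionB_length]
      show cnt i true + cnt i false = f i
      rfl
    have hRFlen : ∀ i : Fin n, (RF i).length = f i := by
      intro i
      simp only [hRF]
      rw [regionB_length]
      show cnt i false + cnt i true = cnt i true + cnt i false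
      omega
    have hbllen : ∀ i : Fin n, (bl i).length = 3 + 2 * f i := by
      intro i
      simp only [hbl]
      rw [blistB_length, hRTlen, hRFlen]
      omega
    have hblockr : ∀ x ∈ Sb, x.length = r := by
      intro x hx
      rw [hSb] at hx
      rcases mem_flatten.1 hx with ⟨l, hl, hxl⟩
      rcases mem_map.1 hl with ⟨i, _, rfl⟩
      rcases blistB_mem hxl with h | h | h
      · rw [h, hr]; simp
      · rw [hr]; exact regionB_blocklen h
      · rw [hr]; exact regionB_blocklen h
    have haS : ∀ (i : Fin n) (pos : Bool),
        (regionB q n m (fun j => (lits j).count (i, pos)) (cnt i (! pos))).flatten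
          = aStr i pos := by
      intro i pos
      rw [regionB_flatten]
    have hbi : ∀ i : Fin n, (bl i).flatten = b i := by
      intro i
      simp only [hbl]
      show (blistB (idStr q (i.val + 1)) (RT i) (RF i)).flatten = b i
      unfold blistB
      simp only [flatten_append, flatten_cons, flatten_nil, append_nil]
      simp only [hRT, hRF]
      rw [haS i true, haS i false]
    have hsSb : s = Sb.flatten := by
      show ((List.finRange n).map b).flatten = _
      rw [hSb, flatten_flatten_map]
      congr 1
      exact (List.map_congr_left (fun i _ => (hbi i).symm))
    -- positions of variable regions
    set P : Fin n → ℕ := fun i =>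
      (((List.finRange n).take i.val).map (fun i' => 3 + 2 * f i')).sum with hP
    have hgetmap : ∀ (k : ℕ) (hkn : k < n),
        ((List.finRange n).map bl).getD k [] = bl ⟨k, hkn⟩ := by
      intro k hkn
      rw [List.getD_eq_getElem _ _ (by simpa using hkn)]
      simp [List.getElem_finRange]
    have hsumtake : ∀ (k : ℕ) (hkn : k < n),
        ((((List.finRange n).map bl).take k).map List.length).sum = P ⟨k, hkn⟩ := by
      intro k hkn
      rw [← List.map_take, List.map_map]
      simp only [hP]
      exact congrArg List.sum (List.map_congr_left (fun x _ => hbllen x))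
    have hchar : ∀ β, β < Sb.length → ∃ (i : Fin n) (c : ℕ), c < 3 + 2 * f i ∧
        β = P i + c ∧ Sb.getD β [] = (bl i).getD c [] := by
      intro β hβ
      have hβ2 : β < ((List.finRange n).map bl).flatten.length := by
        rw [← hSb]
        exact hβ
      obtain ⟨k, c, hk, hc, he⟩ := exists_flatten_decomp _ β hβ2
      have hkn : k < n := by simpa using hk
      refine ⟨⟨k, hkn⟩, c, ?_, ?_, ?_⟩
      · rw [hgetmap k hkn, hbllen] at hc
        exact hc
      · rw [he, hsumtake k hkn]
      · have hres := getD_flatten_add ((List.finRange n).map bl) k c ([] : List Bool)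
          (by rw [hgetmap k hkn]; rw [hgetmap k hkn] at hc; exact hc)
        rw [hgetmap k hkn] at hres
        rw [hSb, he]
        exact hres
    -- identity of blocks
    have hii : ∀ i : Fin n, 1 ≤ i.val + 1 ∧ i.val + 1 ≤ 2 ^ q := by
      intro i
      have := i.isLt
      constructor
      · omega
      · omega
    have hjj : ∀ j : Fin m, 1 ≤ n + 1 + j.val ∧ n + 1 + j.val ≤ 2 ^ q := by
      intro j
      have := j.isLt
      constructor
      · omega
      · omega
    have hblgetmem : ∀ (i : Fin n) (c : ℕ), c < 3 + 2 * f i → (bl i).getD c [] ∈ bl i := by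
      intro i c hc
      rw [List.getD_eq_getElem _ _ (by rw [hbllen]; exact hc)]
      exact List.getElem_mem _
    have hblockcases : ∀ β, β < Sb.length → ∀ (kk : ℕ), 1 ≤ kk → kk ≤ n + m →
        Dom (idStr q kk) (Sb.getD β []) → Sb.getD β [] = idStr q kk := by
      intro β hβ kk hk1 hk2 hDom
      obtain ⟨i, c, hc, hβe, hbe⟩ := hchar β hβ
      rw [hbe] at hDom ⊢
      have hxmem := hblgetmem i c hc
      rcases blistB_mem hxmem with hx | hx | hx
      · rw [hx] at hDom ⊢
        rw [dom_id_id hk1 (le_trans hk2 hq2) (hii i).1 (hii i).2 hDom]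
      · rcases regionB_mem hx with hfil | ⟨j, _, hid⟩
        · rw [hfil] at hDom
          exact absurd hDom (not_dom_id_filler hq1)
        · rw [hid] at hDom ⊢
          rw [dom_id_id hk1 (le_trans hk2 hq2) (hjj j).1 (hjj j).2 hDom]
      · rcases regionB_mem hx with hfil | ⟨j, _, hid⟩
        · rw [hfil] at hDom
          exact absurd hDom (not_dom_id_filler hq1)
        · rw [hid] at hDom ⊢
          rw [dom_id_id hk1 (le_trans hk2 hq2) (hjj j).1 (hjj j).2 hDom]
    -- position of an anchor block
    have hanchorpos : ∀ (i : Fin n) (γ : ℕ), γ < Sb.length →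
        Sb.getD γ [] = idStr q (i.val + 1) →
        γ = P i ∨ γ = P i + (1 + f i) ∨ γ = P i + (2 + 2 * f i) := by
      intro i γ hγ hid
      obtain ⟨i', c, hc, hγe, hbe⟩ := hchar γ hγ
      rw [hbe] at hid
      have hT := hRTlen i'
      have hF := hRFlen i'
      have hidc : ∀ (x : List Bool), x ∈ RT i' ∨ x ∈ RF i' →
          x ≠ idStr q (i.val + 1) := by
        intro x hx hco
        have hg : x = fillerStr (4 * q + 2) ∨
            ∃ j : Fin m, 0 < (0:ℕ) + 1 ∧ x = idStr q (n + 1 + j.val) := by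
          rcases hx with hx | hx
          · rcases regionB_mem hx with h | ⟨j, _, h⟩
            · exact Or.inl h
            · exact Or.inr ⟨j, by omega, h⟩
          · rcases regionB_mem hx with h | ⟨j, _, h⟩
            · exact Or.inl h
            · exact Or.inr ⟨j, by omega, h⟩
        rcases hg with h | ⟨j, _, h⟩
        · rw [hco] at h
          exact idStr_ne_fillerStr hq1 h
        · rw [hco] at h
          have := idStr_inj (hii i).1 (hii i).2 (hjj j).1 (hjj j).2 h
          have hj := j.isLt
          have hi := i.isLt
          omega
      have hieq : ∀ (hcase : (bl i').getD c [] = idStr q (i'.val + 1)), i' = i := by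
        intro hcase
        rw [hcase] at hid
        have := idStr_inj (hii i').1 (hii i').2 (hii i).1 (hii i).2 hid
        exact Fin.ext (by omega)
      have hcases : c = 0 ∨ (1 ≤ c ∧ c ≤ f i') ∨ c = 1 + f i'
          ∨ (2 + f i' ≤ c ∧ c ≤ 1 + 2 * f i') ∨ c = 2 + 2 * f i' := by omega
      rcases hcases with h | h | h | h | h
      · subst h
        have : i' = i := hieq (by simp only [hbl]; exact blistB_getD_zero)
        subst this
        left
        omega
      · exfalso
        have hmem : (bl i').getD c [] ∈ RT i' := by
          simp only [hbl]
          rw [blistB_getD_T h.1 (by rw [hT]; exact h.2)]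
          rw [List.getD_eq_getElem _ _ (by rw [hT]; omega)]
          exact List.getElem_mem _
        exact hidc _ (Or.inl hmem) hid
      · subst h
        have : i' = i := hieq (by
          simp only [hbl]
          have := blistB_getD_A2 (A := idStr q (i'.val + 1)) (RT := RT i') (RF := RF i')
          rwa [hT] at this)
        subst this
        right; left
        omega
      · exfalso
        have hmem : (bl i').getD c [] ∈ RF i' := by
          simp only [hbl]
          rw [blistB_getD_F (by rw [hT]; omega) (by rw [hT, hF]; omega)]
          rw [List.getD_eq_getElem _ _ (by rw [hF, hT]; omega)]
          exact List.getElem_mem _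
        exact hidc _ (Or.inr hmem) hid
      · subst h
        have : i' = i := hieq (by
          simp only [hbl]
          have h3 := blistB_getD_A3 (A := idStr q (i'.val + 1)) (RT := RT i') (RF := RF i')
          rw [hT, hF] at h3
          rw [show 2 + 2 * f i' = 2 + f i' + f i' from by omega]
          exact h3)
        subst this
        right; right
        omega
    -- position of a clause block
    have hclausepos : ∀ (j : Fin m) (γ : ℕ), γ < Sb.length →
        Sb.getD γ [] = idStr q (n + 1 + j.val) →
        ∃ (i : Fin n) (pos : Bool), 0 < (lits j).count (i, pos) ∧
          ((pos = true → P i + 1 ≤ γ ∧ γ ≤ P i + f i) ∧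
           (pos = false → P i + 2 + f i ≤ γ ∧ γ ≤ P i + 1 + 2 * f i)) := by
      intro j γ hγ hid
      obtain ⟨i', c, hc, hγe, hbe⟩ := hchar γ hγ
      rw [hbe] at hid
      have hT := hRTlen i'
      have hF := hRFlen i'
      have hanchor_ne : idStr q (i'.val + 1) ≠ idStr q (n + 1 + j.val) := by
        intro h
        have := idStr_inj (hii i').1 (hii i').2 (hjj j).1 (hjj j).2 h
        have := i'.isLt
        omega
      have hcases : c = 0 ∨ (1 ≤ c ∧ c ≤ f i') ∨ c = 1 + f i'
          ∨ (2 + f i' ≤ c ∧ c ≤ 1 + 2 * f i') ∨ c = 2 + 2 * f i' := by omega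
      rcases hcases with h | h | h | h | h
      · exfalso
        subst h
        rw [show (bl i').getD 0 [] = idStr q (i'.val + 1) from by
          simp only [hbl]; exact blistB_getD_zero] at hid
        exact hanchor_ne hid
      · -- in the positive region
        have hmem : idStr q (n + 1 + j.val) ∈ RT i' := by
          rw [← hid]
          simp only [hbl]
          rw [blistB_getD_T h.1 (by rw [hT]; exact h.2)]
          rw [List.getD_eq_getElem _ _ (by rw [hT]; omega)]
          exact List.getElem_mem _
        rcases regionB_mem hmem with hfil | ⟨j', hj'c, hid'⟩
        · exact absurd hfil (idStr_ne_fillerStr hq1)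
        · have : j' = j := by
            have := idStr_inj (hjj j).1 (hjj j).2 (hjj j').1 (hjj j').2 hid'
            exact Fin.ext (by omega)
          subst this
          refine ⟨i', true, hj'c, ⟨fun _ => ⟨by omega, by omega⟩, fun hco => absurd hco (by decide)⟩⟩
      · exfalso
        subst h
        rw [show (bl i').getD (1 + f i') [] = idStr q (i'.val + 1) from by
          simp only [hbl]
          have := blistB_getD_A2 (A := idStr q (i'.val + 1)) (RT := RT i') (RF := RF i')
          rwa [hT] at this] at hid
        exact hanchor_ne hid
      · have hmem : idStr q (n + 1 + j.val) ∈ RF i' := by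
          rw [← hid]
          simp only [hbl]
          rw [blistB_getD_F (by rw [hT]; omega) (by rw [hT, hF]; omega)]
          rw [List.getD_eq_getElem _ _ (by rw [hF, hT]; omega)]
          exact List.getElem_mem _
        rcases regionB_mem hmem with hfil | ⟨j', hj'c, hid'⟩
        · exact absurd hfil (idStr_ne_fillerStr hq1)
        · have : j' = j := by
            have := idStr_inj (hjj j).1 (hjj j).2 (hjj j').1 (hjj j').2 hid'
            exact Fin.ext (by omega)
          subst this
          refine ⟨i', false, hj'c, ⟨fun hco => absurd hco (by decide), fun _ => ⟨by omega, by omega⟩⟩⟩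
      · exfalso
        subst h
        rw [show (bl i').getD (2 + 2 * f i') [] = idStr q (i'.val + 1) from by
          simp only [hbl]
          have h3 := blistB_getD_A3 (A := idStr q (i'.val + 1)) (RT := RT i') (RF := RF i')
          rw [hT, hF] at h3
          rw [show 2 + 2 * f i' = 2 + f i' + f i' from by omega]
          exact h3] at hid
        exact hanchor_ne hid
    have haLen : ∀ (i : Fin n) (pos : Bool), (aStr i pos).length = r * f i := by
      intro i pos
      rw [← haS i pos]
      rw [flatten_length_const (r := r) _ (fun x hx => by rw [hr]; exact regionB_blocklen hx)]
      rw [regionB_length]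
      congr 1
      cases pos
      · show cnt i false + cnt i true = cnt i true + cnt i false
        omega
      · rfl
    have hts3 : ts = (List.finRange n).map (fun i =>
        idStr q (i.val + 1) ++ List.replicate (r * f i) false ++ idStr q (i.val + 1))
      ++ (List.finRange m).map (fun j => idStr q (n + 1 + j.val))
      ++ List.replicate (n + 2 * m) (fillerStr r) := rfl
    -- offsets of the pieces of u
    set off : ℕ → ℕ := fun k => ((u.take k).map List.length).sum with hoff
    have hoffsucc : ∀ k, k < u.length → off (k + 1) = off k + (u.getD k []).length := by
      intro k hk
      simp only [hoff]
      rw [List.take_succ, List.getElem?_eq_getElem hk, map_append, sum_append]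
      rw [List.getD_eq_getElem _ _ hk]
      simp
    have hoffstep : ∀ k, off k ≤ off (k + 1) := by
      intro k
      simp only [hoff, List.take_succ, map_append, sum_append]
      exact Nat.le_add_right _ _
    have hoffmono : ∀ k d, off k ≤ off (k + d) := by
      intro k d
      induction d with
      | zero => exact le_rfl
      | succ d ih => exact le_trans ih (hoffstep (k + d))
    have hmemts : ∀ t ∈ u, t ∈ ts := fun t ht => (hperm.mem_iff).1 ht
    have htscases : ∀ t ∈ ts,
        (∃ i : Fin n, t = idStr q (i.val + 1) ++ List.replicate (r * f i) false
            ++ idStr q (i.val + 1))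
        ∨ (∃ j : Fin m, t = idStr q (n + 1 + j.val)) ∨ t = fillerStr r := by
      intro t ht
      rw [hts3] at ht
      rcases mem_append.1 ht with h | h
      · rcases mem_append.1 h with h | h
        · left
          rcases mem_map.1 h with ⟨i, _, rfl⟩
          exact ⟨i, rfl⟩
        · right; left
          rcases mem_map.1 h with ⟨j, _, rfl⟩
          exact ⟨j, rfl⟩
      · right; right
        exact eq_of_mem_replicate h
    have hdvdlen : ∀ t ∈ u, r ∣ t.length := by
      intro t ht
      rcases htscases t (hmemts t ht) with ⟨i, rfl⟩ | ⟨j, rfl⟩ | rfl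
      · refine ⟨2 + f i, ?_⟩
        simp only [length_append, idStr_length, length_replicate]
        rw [hr]
        ring
      · exact ⟨1, by rw [idStr_length, hr]; ring⟩
      · exact ⟨1, by rw [hr]; simp⟩
    have hoffdvd : ∀ k, r ∣ off k := by
      intro k
      simp only [hoff]
      refine List.dvd_sum ?_
      intro x hx
      rcases mem_map.1 hx with ⟨t, ht, rfl⟩
      exact hdvdlen t (List.take_subset _ _ ht)
    -- total lengths
    have hSblen2 : s.length = r * Sb.length := by
      rw [hsSb]
      exact flatten_length_const Sb hblockr
    have hblen : ∀ i : Fin n, (b i).length = r * (3 + 2 * f i) := by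
      intro i
      have hbe : b i = idStr q (i.val + 1) ++ aStr i true ++ idStr q (i.val + 1)
          ++ aStr i false ++ idStr q (i.val + 1) := rfl
      rw [hbe]
      simp only [length_append, idStr_length, haLen]
      rw [hr]
      ring
    have hslen : s.length = r * (3 * n + 6 * m) := by
      show ((List.finRange n).map b).flatten.length = _
      rw [length_flatten, map_map]
      rw [show List.map (List.length ∘ b) (List.finRange n)
          = List.map (fun i => r * (3 + 2 * f i)) (List.finRange n) from
        List.map_congr_left (fun i _ => hblen i)]
      rw [← Fin.sum_univ_def]
      rw [show (∑ i : Fin n, r * (3 + 2 * f i)) = r * ∑ i : Fin n, (3 + 2 * f i) from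
        (Finset.mul_sum _ _ _).symm]
      congr 1
      rw [Finset.sum_add_distrib]
      rw [show (∑ _i : Fin n, (3:ℕ)) = 3 * n from by
        simp [Finset.sum_const, Finset.card_univ, mul_comm]]
      rw [show (∑ i : Fin n, 2 * f i) = 2 * ∑ i : Fin n, f i from
        (Finset.mul_sum _ _ _).symm]
      rw [hf_sum]
      ring
    have htslen : (ts.map List.length).sum = r * (3 * n + 6 * m) := by
      rw [hts3]
      rw [map_append, map_append, sum_append, sum_append, map_map, map_map]
      rw [show List.map (List.length ∘ (fun i : Fin n => idStr q (i.val + 1)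
            ++ List.replicate (r * f i) false ++ idStr q (i.val + 1))) (List.finRange n)
          = List.map (fun i : Fin n => r * (2 + f i)) (List.finRange n) from
        List.map_congr_left (fun i _ => by
          simp only [Function.comp_apply, length_append, idStr_length, length_replicate]
          rw [hr]
          ring)]
      rw [show List.map (List.length ∘ (fun j : Fin m => idStr q (n + 1 + j.val)))
            (List.finRange m)
          = List.map (fun _ : Fin m => r) (List.finRange m) from
        List.map_congr_left (fun j _ => by
          simp only [Function.comp_apply, idStr_length]; rfl)]
      rw [show (List.replicate (n + 2 * m) (fillerStr r)).map List.length
          = List.replicate (n + 2 * m) r from by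
        rw [List.map_replicate]
        congr 1
        rw [hr]
        simp]
      rw [← Fin.sum_univ_def, ← Fin.sum_univ_def, List.sum_replicate]
      rw [show (∑ i : Fin n, r * (2 + f i)) = r * ∑ i : Fin n, (2 + f i) from
        (Finset.mul_sum _ _ _).symm]
      rw [Finset.sum_add_distrib]
      rw [show (∑ _i : Fin n, (2:ℕ)) = 2 * n from by
        simp [Finset.sum_const, Finset.card_univ, mul_comm]]
      rw [hf_sum]
      rw [show (∑ _j : Fin m, r) = m * r from by
        simp [Finset.sum_const, Finset.card_univ, mul_comm]]
      rw [smul_eq_mul]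
      ring
    have htots : (u.map List.length).sum = s.length := by
      have h1 : (u.map List.length).sum = (ts.map List.length).sum :=
        (hperm.map List.length).sum_eq
      rw [h1, htslen, hslen]
    have hutot : ∀ k, k < u.length → off k + (u.getD k []).length ≤ s.length := by
      intro k hk
      rw [← htots]
      have hdropk : u.getD k [] :: u.drop (k + 1) = u.drop k := by
        rw [List.getD_eq_getElem _ _ hk]
        exact List.getElem_cons_drop hk
      calc off k + (u.getD k []).length
          ≤ off k + ((u.drop k).map List.length).sum := by
            rw [← hdropk, map_cons, sum_cons]
            omega
        _ = (u.map List.length).sum := by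
            conv_rhs => rw [← List.take_append_drop k u]
            rw [map_append, sum_append]
    have hpiece : ∀ k, k < u.length → ∀ p, (u.getD k []).getD p false = true →
        s.getD (off k + p) false = true := by
      intro k hk p hp
      have hplen : p < (u.getD k []).length := by
        by_contra hcon
        rw [List.getD_eq_default _ _ (by omega)] at hp
        exact Bool.false_ne_true hp
      have hdropk : u.getD k [] :: u.drop (k + 1) = u.drop k := by
        rw [List.getD_eq_getElem _ _ hk]
        exact List.getElem_cons_drop hk
      have hfl2 : u.flatten = (u.take k).flatten
          ++ (u.getD k [] :: u.drop (k + 1)).flatten := by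
        rw [hdropk, ← flatten_append, take_append_drop]
      apply hdom
      rw [hfl2]
      rw [getD_append_right _ _ _ _ (by
        rw [length_flatten]
        simp only [hoff]
        exact Nat.le_add_right _ _)]
      rw [length_flatten]
      rw [show off k + p - ((u.take k).map List.length).sum = p from by
        simp only [hoff]; omega]
      rw [flatten_cons]
      rw [getD_append _ _ _ _ hplen]
      exact hp
    have hdisj : ∀ k k', k < k' → k' < u.length →
        off k + (u.getD k []).length ≤ off k' := by
      intro k k' hkk hk'
      have h1 := hoffsucc k (lt_trans hkk hk')
      have h2 := hoffmono (k + 1) (k' - (k + 1))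
      rw [show k + 1 + (k' - (k + 1)) = k' from by omega] at h2
      omega
    have hsblk : ∀ (γ p : ℕ), γ < Sb.length → p < r →
        s.getD (r * γ + p) false = (Sb.getD γ []).getD p false := by
      intro γ p hγ hp
      have hblk : (Sb.getD γ []).length = r :=
        hblockr _ (by rw [List.getD_eq_getElem _ _ hγ]; exact List.getElem_mem _)
      have h2 := getD_flatten_add Sb γ p false (by rw [hblk]; exact hp)
      rw [sum_map_length_take (r := r) Sb γ hblockr (le_of_lt hγ)] at h2
      rw [hsSb]
      exact h2
    -- locate the variable selection pieces
    have hvpidx : ∀ i : Fin n, ∃ k, k < u.length ∧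
        u.getD k [] = idStr q (i.val + 1) ++ List.replicate (r * f i) false
          ++ idStr q (i.val + 1) := by
      intro i
      have hmem : (idStr q (i.val + 1) ++ List.replicate (r * f i) false
          ++ idStr q (i.val + 1)) ∈ u := by
        refine (hperm.mem_iff).2 ?_
        rw [hts3]
        refine mem_append.2 (Or.inl (mem_append.2 (Or.inl ?_)))
        exact mem_map.2 ⟨i, List.mem_finRange i, rfl⟩
      obtain ⟨k, hk, he⟩ := List.getElem_of_mem hmem
      exact ⟨k, hk, by rw [List.getD_eq_getElem _ _ hk]; exact he⟩
    choose K hK1 hK2 using hvpidx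
    set βv : Fin n → ℕ := fun i => off (K i) / r with hβdef
    have hoffK : ∀ i : Fin n, off (K i) = r * βv i := by
      intro i
      simp only [hβdef]
      exact (Nat.mul_div_cancel' (hoffdvd (K i))).symm
    have hvplen : ∀ i : Fin n, (u.getD (K i) []).length = r * (2 + f i) := by
      intro i
      rw [hK2 i]
      simp only [length_append, idStr_length, length_replicate]
      rw [hr]
      ring
    have hβbound : ∀ i : Fin n, βv i + (2 + f i) ≤ Sb.length := by
      intro i
      have h1 := hutot (K i) (hK1 i)
      rw [hvplen i, hoffK i, hSblen2, ← Nat.mul_add] at h1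
      exact Nat.le_of_mul_le_mul_left h1 hrpos
    have hanchor : ∀ (i : Fin n) (e : ℕ), (e = 0 ∨ e = 1 + f i) →
        Dom (idStr q (i.val + 1)) (Sb.getD (βv i + e) []) := by
      intro i e he p hp
      have hplen : p < r := by
        by_contra hcon
        rw [List.getD_eq_default _ _ (by rw [idStr_length, ← hr]; omega)] at hp
        exact Bool.false_ne_true hp
      have hup : (u.getD (K i) []).getD (r * e + p) false = true := by
        rw [hK2 i]
        rcases he with rfl | rfl
        · rw [Nat.mul_zero, Nat.zero_add]
          rw [getD_append _ _ _ _ (by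
            simp only [length_append, idStr_length, length_replicate]
            rw [← hr]
            omega)]
          rw [getD_append _ _ _ _ (by rw [idStr_length, ← hr]; exact hplen)]
          exact hp
        · rw [getD_append_right _ _ _ _ (by
            simp only [length_append, idStr_length, length_replicate]
            rw [show r * (1 + f i) = r + r * f i from by ring, ← hr]
            omega)]
          rw [show r * (1 + f i) + p - (idStr q (i.val + 1)
              ++ List.replicate (r * f i) false).length = p from by
            simp only [length_append, idStr_length, length_replicate]
            rw [show r * (1 + f i) = r + r * f i from by ring, ← hr]
            omega]
          exact hp
      have h2 := hpiece (K i) (hK1 i) (r * e + p) hup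
      rw [show off (K i) + (r * e + p) = r * (βv i + e) + p from by
        rw [hoffK i]; ring] at h2
      rw [← hsblk (βv i + e) p (by
        have := hβbound i
        rcases he with rfl | rfl <;> omega) hplen]
      exact h2
    have hvppos : ∀ i : Fin n, βv i = P i ∨ βv i = P i + (1 + f i) := by
      intro i
      have hb0 : Sb.getD (βv i) [] = idStr q (i.val + 1) :=
        hblockcases (βv i) (by have := hβbound i; omega) (i.val + 1)
          (by omega) (by have := i.isLt; omega)
          (by have h0 := hanchor i 0 (Or.inl rfl); simpa using h0)
      have hb1 : Sb.getD (βv i + (1 + f i)) [] = idStr q (i.val + 1) :=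
        hblockcases _ (by have := hβbound i; omega) _ (by omega)
          (by have := i.isLt; omega) (hanchor i (1 + f i) (Or.inr rfl))
      have hp0 := hanchorpos i (βv i) (by have := hβbound i; omega) hb0
      have hp1 := hanchorpos i (βv i + (1 + f i)) (by have := hβbound i; omega) hb1
      omega
    refine ⟨fun i => decide (βv i ≠ P i), fun j => ?_⟩
    have hcpmem : idStr q (n + 1 + j.val) ∈ u := by
      refine (hperm.mem_iff).2 ?_
      rw [hts3]
      refine mem_append.2 (Or.inl (mem_append.2 (Or.inr ?_)))
      exact mem_map.2 ⟨j, List.mem_finRange j, rfl⟩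
    obtain ⟨k', hk', hke'⟩ := List.getElem_of_mem hcpmem
    have hkd' : u.getD k' [] = idStr q (n + 1 + j.val) := by
      rw [List.getD_eq_getElem _ _ hk']; exact hke'
    set γ := off k' / r with hγdef
    have hoffk' : off k' = r * γ := (Nat.mul_div_cancel' (hoffdvd k')).symm
    have hγbound : γ + 1 ≤ Sb.length := by
      have h1 := hutot k' hk'
      rw [hkd', hSblen2, hoffk', idStr_length, ← hr] at h1
      have h2 : r * (γ + 1) ≤ r * Sb.length := by
        rw [Nat.mul_add, Nat.mul_one]
        omega
      exact Nat.le_of_mul_le_mul_left h2 hrpos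
    have hcdom : Dom (idStr q (n + 1 + j.val)) (Sb.getD γ []) := by
      intro p hp
      have hplen : p < r := by
        by_contra hcon
        rw [List.getD_eq_default _ _ (by rw [idStr_length, ← hr]; omega)] at hp
        exact Bool.false_ne_true hp
      have h2 := hpiece k' hk' p (by rw [hkd']; exact hp)
      rw [show off k' + p = r * γ + p from by rw [hoffk']] at h2
      rw [← hsblk γ p (by omega) hplen]
      exact h2
    have hceq : Sb.getD γ [] = idStr q (n + 1 + j.val) :=
      hblockcases γ (by omega) _ (by omega) (by have := j.isLt; omega) hcdom
    obtain ⟨i, pos, hcount, hbounds⟩ := hclausepos j γ (by omega) hceq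
    have hKne : K i ≠ k' := by
      intro hco
      have h1 := hK2 i
      rw [hco, hkd'] at h1
      have h2 := congrArg List.length h1
      simp only [length_append, idStr_length, length_replicate] at h2
      rw [← hr] at h2
      omega
    have hover : ∀ lo : ℕ, off (K i) = lo →
        lo ≤ off k' → off k' + r ≤ lo + r * (2 + f i) → False := by
      intro lo h1 h3 h4
      rcases lt_or_gt_of_ne hKne with hlt | hgt
      · have h5 := hdisj (K i) k' hlt hk'
        rw [hvplen i, h1] at h5
        omega
      · have h5 := hdisj k' (K i) hgt (hK1 i)
        rw [hkd', idStr_length, ← hr, h1] at h5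
        omega
    have hai : (decide (βv i ≠ P i)) = pos := by
      have hbT := hbounds.1
      have hbF := hbounds.2
      rcases hvppos i with hb | hb
      · cases pos
        · simp [hb]
        · exfalso
          have hγT := hbT rfl
          refine hover (r * P i) (by rw [hoffK i, hb]) ?_ ?_
          · rw [hoffk']
            exact Nat.mul_le_mul (le_refl r) (by omega)
          · rw [hoffk']
            calc r * γ + r = r * (γ + 1) := by ring
              _ ≤ r * (P i + 2 + f i) := Nat.mul_le_mul (le_refl r) (by omega)
              _ = r * P i + r * (2 + f i) := by ring
      · cases pos
        · exfalso
          have hγF := hbF rfl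
          refine hover (r * (P i + (1 + f i))) (by rw [hoffK i, hb]) ?_ ?_
          · rw [hoffk']
            exact Nat.mul_le_mul (le_refl r) (by omega)
          · rw [hoffk']
            calc r * γ + r = r * (γ + 1) := by ring
              _ ≤ r * (P i + (1 + f i) + (2 + f i)) := Nat.mul_le_mul (le_refl r) (by omega)
              _ = r * (P i + (1 + f i)) + r * (2 + f i) := by ring
        · rw [hb]
          simp only [ne_eq, decide_eq_true_eq]
          omega
    have hmemlit : (i, pos) ∈ lits j := List.count_pos_iff.1 hcount
    have hl : lits j = [(clauses j).1, (clauses j).2.1, (clauses j).2.2] := rfl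
    rw [hl] at hmemlit
    simp only [List.mem_cons, List.not_mem_nil, or_false] at hmemlit
    rcases hmemlit with h | h | h
    · left
      rw [← h]
      exact hai
    · right; left
      rw [← h]
      exact hai
    · right; right
      rw [← h]
      exact hai
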